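/- Let α : V × V → Λ be a symmetric bilinear map satisfying ⟨α(X,Y),w⟩ = −(X,Y) for all X,Y ∈ V, whose associated bilinear map β is flat and satisfies the compatibility condition ⟨⟨β(X,Y),γ(Z,T)⟩⟩ = ⟨⟨β(X,T),γ(Z,Y)⟩⟩ for all X,Y,Z,T ∈ V. Suppose S(β) is degenerate, s ≤ n − 1, and v ∈ U₀ is a light-like vector with S(β) ∩ S(β)^⊥ = span{(v,0),(0,v)}. Then ⟨α(X,Y),v⟩ = 0 for all X,Y ∈ V. -/

import Mathlib

open Module Finset


section coords

variable {p : ℕ} {Λ : Type} [AddCommGroup Λ] [Module ℝ Λ]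
  (ip : LinearMap.BilinForm ℝ Λ) (e : Basis (Fin p) ℝ Λ)

lemma ip_coords
    (he : ∀ i j, ip (e i) (e j) =
      if i = j then (if (i : ℕ) = 0 then (-1 : ℝ) else 1) else 0)
    (x y : Λ) :
    ip x y = ∑ i : Fin p, (if (i : ℕ) = 0 then (-1 : ℝ) else 1) * (e.repr x i * e.repr y i) := by
  conv_lhs => rw [← e.sum_repr x, ← e.sum_repr y]
  simp only [map_sum, map_smul, LinearMap.sum_apply, LinearMap.smul_apply, smul_eq_mul, he]
  refine Finset.sum_congr rfl (fun j _ => ?_)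
  rw [Finset.sum_congr rfl (fun i _ => by rw [mul_ite, mul_zero]),
    Finset.sum_ite_eq' Finset.univ j (fun i => (e.repr x) i * (if (i:ℕ) = 0 then (-1:ℝ) else 1))]
  simp only [Finset.mem_univ, if_true]
  ring

end coords

section lorentz

variable {p : ℕ} {Λ : Type} [AddCommGroup Λ] [Module ℝ Λ]
  {ip : LinearMap.BilinForm ℝ Λ} {e : Basis (Fin p) ℝ Λ}

lemma ip_split (hp : 0 < p)
    (he : ∀ i j, ip (e i) (e j) =
      if i = j then (if (i : ℕ) = 0 then (-1 : ℝ) else 1) else 0)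
    (x y : Λ) :
    ip x y = -(e.repr x ⟨0, hp⟩ * e.repr y ⟨0, hp⟩) +
      ∑ i ∈ Finset.univ.erase (⟨0, hp⟩ : Fin p), e.repr x i * e.repr y i := by
  rw [ip_coords ip e he x y,
    ← Finset.add_sum_erase Finset.univ _ (Finset.mem_univ (⟨0, hp⟩ : Fin p))]
  simp only [Fin.val_mk, if_true, reduceIte, neg_one_mul]
  congr 1
  refine Finset.sum_congr rfl (fun i hi => ?_)
  have hi0 : (i : ℕ) ≠ 0 := by
    intro h
    exact (Finset.mem_erase.mp hi).1 (Fin.ext h)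
  rw [if_neg hi0, one_mul]

/-- key Lorentzian lemma: if `w` is null and nonzero and `x ⊥ w`, then
`ip x x ≥ 0`, and if moreover `ip x x = 0` then `x` is a multiple of `w`. -/
lemma null_orth_null (hp : 0 < p)
    (he : ∀ i j, ip (e i) (e j) =
      if i = j then (if (i : ℕ) = 0 then (-1 : ℝ) else 1) else 0)
    (w : Λ) (hww : ip w w = 0) (hw0 : w ≠ 0)
    (x : Λ) (horth : ip x w = 0) :
    0 ≤ ip x x ∧ (ip x x = 0 → ∃ t : ℝ, x = t • w) := by
  classical
  set i₀ : Fin p := ⟨0, hp⟩ with hi₀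
  set rw' : Fin p → ℝ := fun i => e.repr w i with hrw
  set rx : Fin p → ℝ := fun i => e.repr x i with hrx
  have hwsum : ∑ i ∈ Finset.univ.erase i₀, rw' i * rw' i = rw' i₀ * rw' i₀ := by
    have := ip_split hp he w w
    rw [hww] at this
    linarith
  have hxw : ∑ i ∈ Finset.univ.erase i₀, rx i * rw' i = rx i₀ * rw' i₀ := by
    have := ip_split hp he x w
    rw [horth] at this
    linarith
  have hw₀ : rw' i₀ ≠ 0 := by
    intro h0
    apply hw0
    have hall : ∀ i, e.repr w i = 0 := by
      have hz : ∀ i ∈ Finset.univ.erase i₀, rw' i * rw' i = 0 := by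
        rw [← Finset.sum_eq_zero_iff_of_nonneg (fun i _ => mul_self_nonneg (rw' i))]
        rw [hwsum, h0, mul_zero]
      intro i
      by_cases hi : i = i₀
      · rw [hi]; exact h0
      · exact mul_self_eq_zero.mp (hz i (Finset.mem_erase.mpr ⟨hi, Finset.mem_univ i⟩))
    have : e.repr w = 0 := Finsupp.ext hall
    have := e.repr.map_eq_zero_iff.mp (by simpa using this)
    exact this
  set t : ℝ := rx i₀ / rw' i₀ with ht
  have key : ∑ i ∈ Finset.univ.erase i₀, (rx i - t * rw' i)^2 = ip x x := by
    have expand : ∀ i, (rx i - t * rw' i)^2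
        = rx i * rx i - 2 * t * (rx i * rw' i) + t^2 * (rw' i * rw' i) := by
      intro i; ring
    rw [Finset.sum_congr rfl (fun i _ => expand i), Finset.sum_add_distrib,
      Finset.sum_sub_distrib, ← Finset.mul_sum, ← Finset.mul_sum, hxw, hwsum]
    have hxx := ip_split hp he x x
    have ht2 : t ^ 2 * (rw' i₀ * rw' i₀) = rx i₀ * rx i₀ := by
      field_simp [ht]
      rw [ht, div_pow, div_mul_cancel₀ _ (pow_ne_zero 2 hw₀)]
    have ht1 : 2 * t * (rx i₀ * rw' i₀) = 2 * (rx i₀ * rx i₀) := by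
      field_simp [ht]
      rw [ht, mul_comm (rx i₀ / rw' i₀), mul_assoc, div_mul_cancel₀ _ hw₀]
      ring
    rw [ht2, ht1, hxx]
    ring
  constructor
  · rw [← key]
    exact Finset.sum_nonneg (fun i _ => sq_nonneg _)
  · intro hxx0
    refine ⟨t, ?_⟩
    have hz : ∀ i ∈ Finset.univ.erase i₀, (rx i - t * rw' i)^2 = 0 := by
      rw [← Finset.sum_eq_zero_iff_of_nonneg (fun i _ => sq_nonneg _)]
      rw [key, hxx0]
    have hall : ∀ i, rx i = t * rw' i := by
      intro i
      by_cases hi : i = i₀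
      · rw [hi, ht]; field_simp
      · have := hz i (Finset.mem_erase.mpr ⟨hi, Finset.mem_univ i⟩)
        have := pow_eq_zero_iff (n := 2) (by norm_num) |>.mp this
        linarith
    apply e.repr.injective
    refine Finsupp.ext (fun i => ?_)
    rw [map_smul]
    simpa using hall i

end lorentz


/-- Moore-type lemma for "flat" bilinear maps with positive definite values. -/
lemma moore_aux {V E : Type} [AddCommGroup V] [Module ℝ V] [FiniteDimensional ℝ V]
    [AddCommGroup E] [Module ℝ E] [FiniteDimensional ℝ E]
    (Bp : LinearMap.BilinForm ℝ E) (hBsymm : ∀ x y, Bp x y = Bp y x)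
    (μ : V →ₗ[ℝ] V →ₗ[ℝ] E)
    (hex : ∀ X Y Z T, Bp (μ X Y) (μ Z T) = Bp (μ X Z) (μ Y T)) :
    ∀ (k : ℕ) (G : Submodule ℝ E) (V' : Submodule ℝ V),
      finrank ℝ G ≤ k →
      (∀ x ∈ G, Bp x x = 0 → x = 0) →
      (∀ X Y : V, X ∈ V' → Y ∈ V' → μ X Y ∈ G) →
      finrank ℝ G + 1 ≤ finrank ℝ V' →
      ∃ Y, Y ∈ V' ∧ Y ≠ 0 ∧ μ Y Y = 0 := by
  intro k
  induction k with
  | zero =>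
    intro G V' hGk hdef hvals hdim
    have hG : G = ⊥ := by
      rw [← Submodule.finrank_eq_zero (S := G)]
      omega
    have hV' : V' ≠ ⊥ := by
      intro h
      rw [h] at hdim
      simp [finrank_bot] at hdim
    obtain ⟨x, hxV', hx0⟩ := Submodule.exists_mem_ne_zero_of_ne_bot hV'
    refine ⟨x, hxV', hx0, ?_⟩
    have := hvals x x hxV' hxV'
    rw [hG, Submodule.mem_bot] at this
    exact this
  | succ k ih =>
    intro G V' hGk hdef hvals hdim
    by_cases hE : ∃ Y, Y ∈ V' ∧ Y ≠ 0 ∧ μ Y Y = 0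
    · exact hE
    push_neg at hE
    have hV' : V' ≠ ⊥ := by
      intro h
      rw [h] at hdim
      simp [finrank_bot] at hdim
    obtain ⟨X₀, hX₀V', hX₀0⟩ := Submodule.exists_mem_ne_zero_of_ne_bot hV'
    have hμX₀ : μ X₀ X₀ ≠ 0 := hE X₀ hX₀V' hX₀0
    set ψ : V' →ₗ[ℝ] E := (μ.flip X₀) ∘ₗ V'.subtype with hψ
    have hψapp : ∀ y : V', ψ y = μ (y : V) X₀ := fun y => rfl
    have hrange_le : LinearMap.range ψ ≤ G := by
      rintro _ ⟨y, rfl⟩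
      exact hvals _ _ y.2 hX₀V'
    have hr1 : 1 ≤ finrank ℝ (LinearMap.range ψ) := by
      have hne : LinearMap.range ψ ≠ ⊥ := by
        intro h
        apply hμX₀
        have : ψ ⟨X₀, hX₀V'⟩ ∈ LinearMap.range ψ := LinearMap.mem_range_self _ _
        rw [h, Submodule.mem_bot] at this
        exact this
      have : 0 < finrank ℝ (LinearMap.range ψ) := by
        rw [finrank_pos_iff]
        exact Submodule.nontrivial_iff_ne_bot.mpr hne
      omega
    set G' : Submodule ℝ E := G ⊓ Bp.orthogonal (LinearMap.range ψ) with hG'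
    set K' : Submodule ℝ V := Submodule.map V'.subtype (LinearMap.ker ψ) with hK'
    have hK'le : K' ≤ V' := by
      rintro _ ⟨y, _, rfl⟩
      exact y.2
    have hK'ker : ∀ Y ∈ K', μ Y X₀ = 0 := by
      rintro _ ⟨y, hy, rfl⟩
      exact hy
    -- values on K' lie in G'
    have hvals' : ∀ X Y : V, X ∈ K' → Y ∈ K' → μ X Y ∈ G' := by
      intro X Y hX hY
      refine Submodule.mem_inf.mpr ⟨hvals X Y (hK'le hX) (hK'le hY), ?_⟩
      rw [LinearMap.BilinForm.mem_orthogonal_iff]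
      rintro _ ⟨z, rfl⟩
      rw [hψapp, hBsymm, hex X Y (z : V) X₀,
        hK'ker Y hY]
      simp
    -- disjointness
    have hdisj : LinearMap.range ψ ⊓ G' = ⊥ := by
      rw [Submodule.eq_bot_iff]
      intro x hx
      obtain ⟨hx1, hx2⟩ := Submodule.mem_inf.mp hx
      obtain ⟨hxG, hxO⟩ := Submodule.mem_inf.mp hx2
      refine hdef x hxG ?_
      exact (LinearMap.BilinForm.mem_orthogonal_iff.mp hxO) x hx1
    have hsum : finrank ℝ (LinearMap.range ψ) + finrank ℝ G' ≤ finrank ℝ G := by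
      have h1 := Submodule.finrank_sup_add_finrank_inf_eq (LinearMap.range ψ) G'
      rw [hdisj] at h1
      simp only [finrank_bot, add_zero] at h1
      have h2 : LinearMap.range ψ ⊔ G' ≤ G := sup_le hrange_le inf_le_left
      have h3 := Submodule.finrank_mono h2
      omega
    have hrk : finrank ℝ (LinearMap.range ψ) + finrank ℝ (LinearMap.ker ψ)
        = finrank ℝ V' := LinearMap.finrank_range_add_finrank_ker ψ
    have hK'rank : finrank ℝ K' = finrank ℝ (LinearMap.ker ψ) :=
      Submodule.finrank_map_subtype_eq V' _
    obtain ⟨Y, hYK', hY0, hYμ⟩ := ih G' K' (by omega) (fun x hx => hdef x (Submodule.mem_inf.mp hx).1)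
      hvals' (by omega)
    exact ⟨Y, hK'le hYK', hY0, hYμ⟩

set_option maxHeartbeats 1000000 in
theorem stmt_11
    (n p : ℕ) (hn : 1 ≤ n) (hp : 2 ≤ p)
    {V : Type} [AddCommGroup V] [Module ℝ V] [FiniteDimensional ℝ V]
    (hV : finrank ℝ V = 2 * n)
    (J : V →ₗ[ℝ] V) (hJ : ∀ X, J (J X) = -X)
    {Λ : Type} [AddCommGroup Λ] [Module ℝ Λ] [FiniteDimensional ℝ Λ]
    (hΛ : finrank ℝ Λ = p)
    (ip : LinearMap.BilinForm ℝ Λ) (hipsymm : ∀ ξ η, ip ξ η = ip η ξ)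
    (e : Basis (Fin p) ℝ Λ)
    (he : ∀ i j, ip (e i) (e j) =
      if i = j then (if (i : ℕ) = 0 then (-1 : ℝ) else 1) else 0)
    (g : LinearMap.BilinForm ℝ V) (hgsymm : ∀ X Y, g X Y = g Y X)
    (hgpos : ∀ X : V, X ≠ 0 → 0 < g X X)
    (hgJ : ∀ X Y, g (J X) (J Y) = g X Y)
    (α : V →ₗ[ℝ] V →ₗ[ℝ] Λ) (hαsymm : ∀ X Y, α X Y = α Y X)
    (w : Λ) (hw0 : w ≠ 0) (hww : ip w w = 0)
    (hαw : ∀ X Y, ip (α X Y) w = - g X Y)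
    (bW : LinearMap.BilinForm ℝ (Λ × Λ))
    (hbW : ∀ ξ η, bW ξ η = ip ξ.1 η.1 - ip ξ.2 η.2)
    (β : V → V → Λ × Λ)
    (hβ : ∀ X Y, β X Y = (α X Y + α (J X) (J Y), α X (J Y) - α (J X) Y))
    (γ : V → V → Λ × Λ)
    (hγ : ∀ X Y, γ X Y = (α X Y, α X (J Y)))
    (hflat : ∀ X Y Z T, bW (β X Y) (β Z T) = bW (β X T) (β Z Y))
    (hcompat : ∀ X Y Z T, bW (β X Y) (γ Z T) = bW (β X T) (γ Z Y))
    (Sβ : Submodule ℝ (Λ × Λ))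
    (hSβ : Sβ = Submodule.span ℝ {z : Λ × Λ | ∃ X Y, z = β X Y})
    (U₀ : Submodule ℝ Λ)
    (hU₀ : U₀ = Submodule.map (LinearMap.fst ℝ Λ Λ) Sβ)
    (s : ℕ) (hs : s = finrank ℝ U₀) (hsn : s ≤ n - 1)
    (hdeg : Sβ ⊓ bW.orthogonal Sβ ≠ ⊥)
    (v : Λ) (hvU₀ : v ∈ U₀) (hv0 : v ≠ 0) (hvv : ip v v = 0)
    (hrad : Sβ ⊓ bW.orthogonal Sβ =
      Submodule.span ℝ {((v, 0) : Λ × Λ), ((0, v) : Λ × Λ)}) :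
    ∀ X Y : V, ip (α X Y) v = 0 := by
  classical
  have hp0 : 0 < p := by omega
  -- the bilinear map b
  set b : V →ₗ[ℝ] V →ₗ[ℝ] Λ := α + α.compl₁₂ J J with hbdef
  have hbapp : ∀ X Y, b X Y = α X Y + α (J X) (J Y) := by
    intro X Y
    simp [hbdef, LinearMap.compl₁₂_apply]
  have hβpair : ∀ X Y, β X Y = (b X Y, b X (J Y)) := by
    intro X Y
    rw [hβ]
    refine Prod.ext ?_ ?_
    · simp [hbapp]
    · simp only [hbapp, hJ]
      simp [map_neg, sub_eq_add_neg]
  -- b symmetries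
  have hbsymm : ∀ X Y, b X Y = b Y X := by
    intro X Y
    rw [hbapp, hbapp, hαsymm X Y, hαsymm (J X) (J Y)]
  have hbJ : ∀ X Y, b X (J Y) = - b Y (J X) := by
    intro X Y
    rw [hbapp, hbapp, hJ, hJ]
    simp only [map_neg]
    rw [hαsymm X (J Y), hαsymm (J X) Y]
    abel
  -- g facts
  have hgJ1 : ∀ X Y, g (J X) Y = -(g X (J Y)) := by
    intro X Y
    have h := hgJ (J X) Y
    rw [hJ] at h
    simp only [map_neg, LinearMap.neg_apply] at h
    linarith [h]
  have hgXJX : ∀ X : V, g X (J X) = 0 := by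
    intro X
    have h1 : g X (J X) = g (J X) X := hgsymm _ _
    rw [hgJ1 X X] at h1
    linarith
  -- radical facts
  have hβS : ∀ X Y, β X Y ∈ Sβ := by
    intro X Y
    rw [hSβ]
    exact Submodule.subset_span ⟨X, Y, rfl⟩
  have hv0mem : ((v, (0:Λ)) : Λ × Λ) ∈ Sβ ⊓ bW.orthogonal Sβ := by
    rw [hrad]
    exact Submodule.subset_span (by simp)
  have hbv : ∀ X Y, ip (b X Y) v = 0 := by
    intro X Y
    have h2 := (Submodule.mem_inf.mp hv0mem).2
    have h := (LinearMap.BilinForm.mem_orthogonal_iff.mp h2) (β X Y) (hβS X Y)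
    rw [hbW, hβpair] at h
    simpa using h
  have hbw : ∀ X Y, ip (b X Y) w = -(2 * g X Y) := by
    intro X Y
    rw [hbapp]
    simp only [map_add, LinearMap.add_apply, hαw, hgJ]
    ring
  -- a = ip v w ≠ 0
  have ha : ip v w ≠ 0 := by
    intro ha0
    obtain ⟨-, h2⟩ := null_orth_null hp0 he w hww hw0 v ha0
    obtain ⟨t, htv⟩ := h2 hvv
    -- get a nonzero vector of V
    have : Nontrivial V := by
      rw [← finrank_pos_iff (R := ℝ)]
      omega
    obtain ⟨X, hX0⟩ := exists_ne (0 : V)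
    have hb := hbv X X
    rw [htv] at hb
    simp only [map_smul, smul_eq_mul] at hb
    rw [hbw] at hb
    have hgX := hgpos X hX0
    have ht0 : t = 0 := by
      rcases mul_eq_zero.mp hb with h | h
      · exact h
      · exfalso; nlinarith
    rw [ht0, zero_smul] at htv
    exact hv0 htv
  set a : ℝ := ip v w with hadef
  -- the projection onto the "positive part"
  set πv : Λ →ₗ[ℝ] Λ :=
    LinearMap.id - ((a⁻¹ • (LinearMap.flip ip w)).smulRight v)
      - ((a⁻¹ • (LinearMap.flip ip v)).smulRight w) with hπdef
  have hπapp : ∀ x : Λ, πv x = x - (a⁻¹ * ip x w) • v - (a⁻¹ * ip x v) • w := by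
    intro x
    simp [hπdef, LinearMap.smulRight_apply, LinearMap.flip_apply, smul_smul]
  -- πv values are orthogonal to v and w
  have hπv : ∀ x : Λ, ip (πv x) v = 0 := by
    intro x
    rw [hπapp]
    simp only [map_sub, map_smul, LinearMap.sub_apply, LinearMap.smul_apply, smul_eq_mul]
    rw [hvv, hipsymm w v, ← hadef]
    field_simp
    ring
  have hπw : ∀ x : Λ, ip (πv x) w = 0 := by
    intro x
    rw [hπapp]
    simp only [map_sub, map_smul, LinearMap.sub_apply, LinearMap.smul_apply, smul_eq_mul]
    rw [hww, ← hadef]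
    field_simp
    ring
  have hπv0 : πv v = 0 := by
    rw [hπapp, ← hadef, hvv]
    rw [inv_mul_cancel₀ ha]
    simp
  -- positivity / definiteness on the positive part
  have hPos : ∀ x : Λ, ip x w = 0 → 0 ≤ ip x x :=
    fun x hx => (null_orth_null hp0 he w hww hw0 x hx).1
  have hDef : ∀ x : Λ, ip x w = 0 → ip x v = 0 → ip x x = 0 → x = 0 := by
    intro x hxw hxv hxx
    obtain ⟨t, htx⟩ := (null_orth_null hp0 he w hww hw0 x hxw).2 hxx
    rw [htx] at hxv
    simp only [map_smul, LinearMap.smul_apply, smul_eq_mul] at hxv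
    rw [hipsymm w v, ← hadef] at hxv
    rcases mul_eq_zero.mp hxv with h | h
    · rw [htx, h, zero_smul]
    · exact absurd h ha
  -- P₁
  set P₁ : V →ₗ[ℝ] V →ₗ[ℝ] Λ := b.compr₂ πv with hP₁def
  have hP₁app : ∀ X Y, P₁ X Y = πv (b X Y) := by
    intro X Y; simp [hP₁def]
  have hP₁eq : ∀ X Y, P₁ X Y = b X Y + (a⁻¹ * (2 * g X Y)) • v := by
    intro X Y
    rw [hP₁app, hπapp, hbw, hbv]
    simp only [mul_zero, zero_smul, sub_zero, mul_neg, neg_smul]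
    abel_nf
  have hbeq : ∀ X Y, b X Y = P₁ X Y - (a⁻¹ * (2 * g X Y)) • v := by
    intro X Y
    rw [hP₁eq]
    abel
  have hP₁v : ∀ X Y, ip (P₁ X Y) v = 0 := fun X Y => by rw [hP₁app]; exact hπv _
  have hP₁w : ∀ X Y, ip (P₁ X Y) w = 0 := fun X Y => by rw [hP₁app]; exact hπw _
  have hP₁symm : ∀ X Y, P₁ X Y = P₁ Y X := by
    intro X Y
    rw [hP₁eq, hP₁eq, hbsymm, hgsymm X Y]
  have hPip : ∀ X Y Z T, ip (P₁ X Y) (P₁ Z T) = ip (b X Y) (b Z T) := by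
    intro X Y Z T
    rw [hP₁eq X Y, hP₁eq Z T]
    simp only [map_add, map_smul, LinearMap.add_apply, LinearMap.smul_apply, smul_eq_mul]
    rw [hvv, hbv, hipsymm v (b Z T), hbv]
    ring
  -- flatness in terms of b
  have hflatb : ∀ X Y Z T, ip (b X Y) (b Z T) - ip (b X (J Y)) (b Z (J T))
      = ip (b X T) (b Z Y) - ip (b X (J T)) (b Z (J Y)) := by
    intro X Y Z T
    have h := hflat X Y Z T
    rw [hbW, hbW, hβpair X Y, hβpair Z T, hβpair X T, hβpair Z Y] at h
    exact h
  -- the exchange identity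
  have hEX : ∀ X Y Z T, ip (b X Y) (b Z T) + ip (b X (J Y)) (b Z (J T))
      = ip (b X Z) (b Y T) + ip (b X (J Z)) (b Y (J T)) := by
    intro X Y Z T
    have h := hflatb X Y T Z
    rw [hbsymm T Z, hbJ T Z, hbsymm T Y, hbJ T Y] at h
    simp only [map_neg, LinearMap.neg_apply] at h
    linarith
  -- the positive-definite bilinear form on Λ × Λ
  set Bp : LinearMap.BilinForm ℝ (Λ × Λ) :=
    (ip.compl₁₂ (LinearMap.fst ℝ Λ Λ) (LinearMap.fst ℝ Λ Λ))
      + (ip.compl₁₂ (LinearMap.snd ℝ Λ Λ) (LinearMap.snd ℝ Λ Λ)) with hBpdef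
  have hBp : ∀ ξ η : Λ × Λ, Bp ξ η = ip ξ.1 η.1 + ip ξ.2 η.2 := by
    intro ξ η
    simp [hBpdef, LinearMap.compl₁₂_apply]
  have hBsymm : ∀ ξ η : Λ × Λ, Bp ξ η = Bp η ξ := by
    intro ξ η
    rw [hBp, hBp, hipsymm ξ.1 η.1, hipsymm ξ.2 η.2]
  -- the bilinear map μ
  set μ : V →ₗ[ℝ] V →ₗ[ℝ] (Λ × Λ) :=
    (P₁.compr₂ (LinearMap.inl ℝ Λ Λ)) + ((P₁.compl₂ J).compr₂ (LinearMap.inr ℝ Λ Λ)) with hμdef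
  have hμ : ∀ X Y, μ X Y = (P₁ X Y, P₁ X (J Y)) := by
    intro X Y
    simp [hμdef, LinearMap.compl₂_apply, LinearMap.inl, LinearMap.inr, Prod.ext_iff]
  -- exchange identity for μ
  have hex : ∀ X Y Z T : V, Bp (μ X Y) (μ Z T) = Bp (μ X Z) (μ Y T) := by
    intro X Y Z T
    rw [hBp, hBp, hμ, hμ, hμ, hμ]
    simp only
    rw [hPip, hPip, hPip, hPip]
    exact hEX X Y Z T
  -- the target submodule G
  set Q' : Submodule ℝ Λ := Submodule.map πv U₀ with hQ'def
  set G : Submodule ℝ (Λ × Λ) :=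
    (Submodule.map (LinearMap.inl ℝ Λ Λ) Q') ⊔ (Submodule.map (LinearMap.inr ℝ Λ Λ) Q')
    with hGdef
  have hQ'v : ∀ x ∈ Q', ip x v = 0 ∧ ip x w = 0 := by
    rintro _ ⟨u, -, rfl⟩
    exact ⟨hπv u, hπw u⟩
  have hGmem : ∀ x ∈ G, x.1 ∈ Q' ∧ x.2 ∈ Q' := by
    intro x hx
    rw [hGdef] at hx
    obtain ⟨y, hy, z, hz, hyz⟩ := Submodule.mem_sup.mp hx
    obtain ⟨q₁, hq₁, rfl⟩ := hy
    obtain ⟨q₂, hq₂, rfl⟩ := hz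
    have h1 : x.1 = q₁ := by rw [← hyz]; simp
    have h2 : x.2 = q₂ := by rw [← hyz]; simp
    rw [h1, h2]
    exact ⟨hq₁, hq₂⟩
  have hdefG : ∀ x ∈ G, Bp x x = 0 → x = 0 := by
    intro x hx hB
    obtain ⟨h1, h2⟩ := hGmem x hx
    rw [hBp] at hB
    have p1 := hPos x.1 (hQ'v x.1 h1).2
    have p2 := hPos x.2 (hQ'v x.2 h2).2
    have z1 : x.1 = 0 := hDef x.1 (hQ'v x.1 h1).2 (hQ'v x.1 h1).1 (by linarith)
    have z2 : x.2 = 0 := hDef x.2 (hQ'v x.2 h2).2 (hQ'v x.2 h2).1 (by linarith)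
    exact Prod.ext z1 z2
  have hbU₀ : ∀ X Y, b X Y ∈ U₀ := by
    intro X Y
    rw [hU₀]
    exact ⟨β X Y, hβS X Y, by simp [hβpair]⟩
  have hP₁Q' : ∀ X Y, P₁ X Y ∈ Q' := by
    intro X Y
    rw [hQ'def, hP₁app]
    exact Submodule.mem_map_of_mem (hbU₀ X Y)
  have hvalsG : ∀ X Y : V, μ X Y ∈ G := by
    intro X Y
    rw [hGdef, hμ]
    refine Submodule.mem_sup.mpr ⟨(P₁ X Y, 0), ?_, (0, P₁ X (J Y)), ?_, by simp⟩
    · exact Submodule.mem_map_of_mem (hP₁Q' X Y)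
    · exact Submodule.mem_map_of_mem (hP₁Q' X (J Y))
  -- dimension bound for Q'
  have hQ'rank : finrank ℝ Q' + 1 ≤ s := by
    have hrange : Q' = LinearMap.range (πv ∘ₗ U₀.subtype) := by
      rw [LinearMap.range_comp, Submodule.range_subtype]
    have hrk := LinearMap.finrank_range_add_finrank_ker (πv ∘ₗ U₀.subtype)
    have hker : 1 ≤ finrank ℝ (LinearMap.ker (πv ∘ₗ U₀.subtype)) := by
      have hmem : (⟨v, hvU₀⟩ : U₀) ∈ LinearMap.ker (πv ∘ₗ U₀.subtype) := by
        rw [LinearMap.mem_ker]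
        simpa using hπv0
      have hne : LinearMap.ker (πv ∘ₗ U₀.subtype) ≠ ⊥ := by
        intro hbot
        rw [hbot, Submodule.mem_bot] at hmem
        apply hv0
        simpa [Submodule.mk_eq_zero] using hmem
      have : 0 < finrank ℝ (LinearMap.ker (πv ∘ₗ U₀.subtype)) := by
        rw [finrank_pos_iff]
        exact Submodule.nontrivial_iff_ne_bot.mpr hne
      omega
    have hU : finrank ℝ U₀ = s := hs.symm
    rw [hrange]
    omega
  have hGrank : finrank ℝ G ≤ 2 * finrank ℝ Q' := by
    have h1 := Submodule.finrank_sup_add_finrank_inf_eq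
      (Submodule.map (LinearMap.inl ℝ Λ Λ) Q') (Submodule.map (LinearMap.inr ℝ Λ Λ) Q')
    have h2 := Submodule.finrank_map_le (LinearMap.inl ℝ Λ Λ) Q'
    have h3 := Submodule.finrank_map_le (LinearMap.inr ℝ Λ Λ) Q'
    rw [hGdef]
    omega
  have hsn' : s + 1 ≤ n := by omega
  -- upgrade: a μ-isotropic vector is in the kernel of P₁
  have hupg : ∀ Y : V, μ Y Y = 0 → ∀ Z : V, P₁ Z Y = 0 ∧ P₁ Z (J Y) = 0 := by
    intro Y hY Z
    have h := hex Z Y Z Y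
    rw [hY] at h
    simp only [map_zero] at h
    rw [hBp, hμ] at h
    simp only at h
    have p1 := hPos (P₁ Z Y) (hP₁w Z Y)
    have p2 := hPos (P₁ Z (J Y)) (hP₁w Z (J Y))
    constructor
    · exact hDef _ (hP₁w Z Y) (hP₁v Z Y) (by linarith)
    · exact hDef _ (hP₁w Z (J Y)) (hP₁v Z (J Y)) (by linarith)
  -- first application of the Moore-type lemma
  obtain ⟨Y₀, -, hY₀0, hμY₀⟩ := moore_aux Bp hBsymm μ hex (finrank ℝ G) G ⊤ le_rfl
    hdefG (fun X Y _ _ => hvalsG X Y)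
    (by rw [finrank_top]; omega)
  have hkerY₀ := hupg Y₀ hμY₀
  -- second application, inside the orthogonal complement of Y₀, J Y₀
  set V'' : Submodule ℝ V := LinearMap.ker (g Y₀) ⊓ LinearMap.ker (g (J Y₀)) with hV''def
  have hV''rank : finrank ℝ V ≤ finrank ℝ V'' + 2 := by
    have h1 := Submodule.finrank_sup_add_finrank_inf_eq
      (LinearMap.ker (g Y₀)) (LinearMap.ker (g (J Y₀)))
    have h2 := LinearMap.finrank_range_add_finrank_ker (g Y₀)
    have h3 := LinearMap.finrank_range_add_finrank_ker (g (J Y₀))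
    have h4 : finrank ℝ (LinearMap.range (g Y₀)) ≤ 1 := by
      have := Submodule.finrank_le (LinearMap.range (g Y₀))
      simpa using this
    have h5 : finrank ℝ (LinearMap.range (g (J Y₀))) ≤ 1 := by
      have := Submodule.finrank_le (LinearMap.range (g (J Y₀)))
      simpa using this
    have h6 := Submodule.finrank_le (LinearMap.ker (g Y₀) ⊔ LinearMap.ker (g (J Y₀)))
    rw [hV''def]
    omega
  obtain ⟨X, hXV'', hX0, hμX⟩ := moore_aux Bp hBsymm μ hex (finrank ℝ G) G V'' le_rfl
    hdefG (fun X Y _ _ => hvalsG X Y)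
    (by omega)
  have hkerX := hupg X hμX
  obtain ⟨hgY₀X, hgJY₀X⟩ := Submodule.mem_inf.mp hXV''
  rw [LinearMap.mem_ker] at hgY₀X hgJY₀X
  -- derived orthogonality facts
  have hgY₀JX : g Y₀ (J X) = 0 := by
    rw [hgsymm, hgJ1, hgsymm]
    rw [hgJY₀X]
    ring
  -- values of b
  have hbY₀X : b Y₀ X = 0 := by
    rw [hbeq, (hkerX Y₀).1, hgY₀X]
    simp
  have hbY₀JX : b Y₀ (J X) = 0 := by
    rw [hbeq, (hkerX Y₀).2, hgY₀JX]
    simp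
  have hbY₀Y₀ : b Y₀ Y₀ = -((a⁻¹ * (2 * g Y₀ Y₀)) • v) := by
    rw [hbeq, (hkerY₀ Y₀).1]
    simp
  have hbY₀JY₀ : b Y₀ (J Y₀) = 0 := by
    rw [hbeq, (hkerY₀ Y₀).2, hgXJX Y₀]
    simp
  have hbXX : b X X = -((a⁻¹ * (2 * g X X)) • v) := by
    rw [hbeq, (hkerX X).1]
    simp
  have hbXJX : b X (J X) = 0 := by
    rw [hbeq, (hkerX X).2, hgXJX X]
    simp
  have hbXT : ∀ T, b X T = -((a⁻¹ * (2 * g X T)) • v) := by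
    intro T
    rw [hbeq, hP₁symm, (hkerX T).1]
    simp
  have hbXJT : ∀ T, b X (J T) = (a⁻¹ * (2 * g T (J X))) • v := by
    intro T
    rw [hbJ X T, hbeq, (hkerX T).2]
    simp
  -- nonzero constants
  have hgY₀pos : 0 < g Y₀ Y₀ := hgpos Y₀ hY₀0
  have hgXpos : 0 < g X X := hgpos X hX0
  have hainv : a⁻¹ ≠ 0 := inv_ne_zero ha
  -- instance 1 : f (Z, X) = 0
  have f1 : ∀ Z, ip v (α Z X) = 0 := by
    intro Z
    have h := hcompat Y₀ Y₀ Z X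
    rw [hbW, hbW, hβpair Y₀ Y₀, hβpair Y₀ X, hγ Z X, hγ Z Y₀] at h
    simp only at h
    rw [hbY₀Y₀, hbY₀JY₀, hbY₀X, hbY₀JX] at h
    simp only [map_neg, map_smul, map_zero, LinearMap.neg_apply, LinearMap.smul_apply,
      LinearMap.zero_apply, smul_eq_mul, sub_zero, zero_sub, neg_zero, zero_mul] at h
    have h' : a⁻¹ * (2 * g Y₀ Y₀) * ip v (α Z X) = 0 := by linarith
    rcases mul_eq_zero.mp h' with h'' | h''
    · rcases mul_eq_zero.mp h'' with h3 | h3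
      · exact absurd h3 hainv
      · linarith
    · exact h''
  -- instance 2 : f (Z, J X) = 0
  have f2 : ∀ Z, ip v (α Z (J X)) = 0 := by
    intro Z
    have hbY₀JJX : b Y₀ (J (J X)) = 0 := by
      rw [hJ]
      rw [map_neg, hbY₀X, neg_zero]
    have h := hcompat Y₀ Y₀ Z (J X)
    rw [hbW, hbW, hβpair Y₀ Y₀, hβpair Y₀ (J X), hγ Z (J X), hγ Z Y₀] at h
    simp only at h
    rw [hbY₀Y₀, hbY₀JY₀, hbY₀JX, hbY₀JJX] at h
    simp only [map_neg, map_smul, map_zero, LinearMap.neg_apply, LinearMap.smul_apply,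
      LinearMap.zero_apply, smul_eq_mul, sub_zero, zero_sub, neg_zero, zero_mul] at h
    have h' : a⁻¹ * (2 * g Y₀ Y₀) * ip v (α Z (J X)) = 0 := by linarith
    rcases mul_eq_zero.mp h' with h'' | h''
    · rcases mul_eq_zero.mp h'' with h3 | h3
      · exact absurd h3 hainv
      · linarith
    · exact h''
  -- final instance
  intro Z T
  rw [hipsymm]
  have h := hcompat X X Z T
  rw [hbW, hbW, hβpair X X, hβpair X T, hγ Z T, hγ Z X] at h
  simp only at h
  rw [hbXX, hbXJX, hbXT T, hbXJT T] at h
  simp only [map_neg, map_smul, map_zero, LinearMap.neg_apply, LinearMap.smul_apply,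
    LinearMap.zero_apply, smul_eq_mul, sub_zero, zero_sub, neg_zero, zero_mul] at h
  rw [f1 Z, f2 Z] at h
  simp only [mul_zero, sub_zero, zero_sub, neg_zero, neg_eq_zero] at h
  have h' : a⁻¹ * (2 * g X X) * ip v (α Z T) = 0 := by linarith
  rcases mul_eq_zero.mp h' with h'' | h''
  · rcases mul_eq_zero.mp h'' with h3 | h3
    · exact absurd h3 hainv
    · linarith
  · exact h''
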